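/- Let T: R^d → R^d be a firmly nonexpansive positively homogeneous map. If y is in the image of T and T(y) = 0 and y ≠ 0, then a contradiction arises; equivalently, T(R^d) ∩ Ker T = {0} whenever 0 ∈ Ker T. -/

import Mathlib

/-- Let `T : ℝ^d → ℝ^d` be firmly nonexpansive and positively homogeneous.  If
`0 ∈ Ker T`, then the image of `T` meets `Ker T` only at the origin:
`T(ℝ^d) ∩ Ker T = {0}`. -/
theorem stmt7 {d : ℕ} (T : EuclideanSpace ℝ (Fin d) → EuclideanSpace ℝ (Fin d))
    (hfne : ∀ x y, ‖T x - T y‖ ^ 2 ≤ inner ℝ (x - y) (T x - T y))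
    (hhom : ∀ x, ∀ t : ℝ, 0 < t → T (t • x) = t • T x)
    (h0 : T 0 = 0) :
    Set.range T ∩ {x | T x = 0} = {0} := by
  ext y
  simp only [Set.mem_inter_iff, Set.mem_range, Set.mem_setOf_eq, Set.mem_singleton_iff]
  constructor
  · rintro ⟨⟨x, rfl⟩, hker⟩
    by_contra hne
    have hTx : T x ≠ 0 := hne
    have hnorm : (0:ℝ) < ‖T x‖ ^ 2 := pow_pos (norm_pos_iff.mpr hne) 2
    -- key inequality for all s > 0
    have key : ∀ s : ℝ, 0 < s →
        ‖T x‖ ^ 2 ≤ inner ℝ x (T x) - s * ‖T x‖ ^ 2 := by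
      intro s hs
      have h1 := hfne x (s • T x)
      have h2 : T (s • T x) = 0 := by rw [hhom _ s hs, hker, smul_zero]
      rw [h2, sub_zero] at h1
      calc ‖T x‖ ^ 2 ≤ inner ℝ (x - s • T x) (T x) := h1
        _ = inner ℝ x (T x) - s * ‖T x‖ ^ 2 := by
            rw [inner_sub_left, real_inner_smul_left, real_inner_self_eq_norm_sq]
    have hxy : (0:ℝ) < inner ℝ x (T x) + 1 := by
      have := key 1 one_pos
      nlinarith
    have := key ((inner ℝ x (T x) + 1) / ‖T x‖ ^ 2) (by positivity)
    rw [div_mul_cancel₀ _ (ne_of_gt hnorm)] at this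
    nlinarith
  · rintro rfl
    exact ⟨⟨0, h0⟩, h0⟩
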